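/- Let 0 < θ < 1/10, let x⋆ ∈ (1+4θ, 1+6θ) be the unique zero in (1,∞) of F_θ(x) = x + 1 + θ − (1+x)·√((x+4)/5). Then the integral of F_θ over the interval [1+θ, x⋆] satisfies ∫_{1+θ}^{x⋆} F_θ(x) dx ≥ (9/10)·θ². -/

import Mathlib

open intervalIntegral

lemma psi_convex : ConvexOn ℝ (Set.Ici 0) (fun u : ℝ => u ^ (3/2 : ℝ) - 3 * Real.sqrt u) := by
  have h1 : ConvexOn ℝ (Set.Ici 0) (fun u : ℝ => u ^ (3/2 : ℝ)) :=
    convexOn_rpow (by norm_num : (1:ℝ) ≤ 3/2)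
  have h2 : ConcaveOn ℝ (Set.Ici 0) (fun u : ℝ => 3 * Real.sqrt u) := by
    have := (Real.strictConcaveOn_sqrt.concaveOn).smul (c := (3:ℝ)) (by norm_num)
    simpa [smul_eq_mul] using this
  exact h1.sub h2

lemma psi_eq (u : ℝ) (hu : 0 ≤ u) :
    u ^ (3/2 : ℝ) - 3 * Real.sqrt u = (u - 3) * Real.sqrt u := by
  have : u ^ (3/2 : ℝ) = u * Real.sqrt u := by
    rw [show (3/2 : ℝ) = 1 + 1/2 by norm_num, Real.rpow_add' hu (by norm_num),
      Real.rpow_one, Real.sqrt_eq_rpow]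
  rw [this]; ring

lemma sqrt_div5 (u : ℝ) (hu : 0 ≤ u) :
    Real.sqrt (u / 5) = Real.sqrt u / Real.sqrt 5 := Real.sqrt_div hu 5

/-- For `0 < θ < 1/10` and `x⋆ ∈ (1+4θ, 1+6θ)` the zero of
`F_θ(x) = x + 1 + θ − (1+x)·√((x+4)/5)`, one has
`∫_{1+θ}^{x⋆} F_θ(x) dx ≥ (9/10)·θ²`. -/
theorem integral_lower_bound (θ xstar : ℝ) (hθ0 : 0 < θ) (hθ1 : θ < 1/10)
    (hx1 : 1 + 4*θ < xstar) (hx2 : xstar < 1 + 6*θ)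
    (hzero : xstar + 1 + θ - (1 + xstar) * Real.sqrt ((xstar + 4) / 5) = 0) :
    (9/10) * θ^2 ≤
      ∫ x in (1 + θ)..xstar, (x + 1 + θ - (1 + x) * Real.sqrt ((x + 4) / 5)) := by
  set s : ℝ := xstar - 1 with hs
  have hs4 : 4*θ < s := by simp [hs]; linarith
  have hs6 : s < 6*θ := by simp [hs]; linarith
  have hspos : 0 < s := by linarith
  have hsne : s ≠ 0 := ne_of_gt hspos
  have hsqrt5pos : (0:ℝ) < Real.sqrt 5 := Real.sqrt_pos.mpr (by norm_num)
  have hab_le : 1 + θ ≤ xstar := by linarith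
  -- pointwise lower bound by the chord
  have key : ∀ x ∈ Set.Icc (1+θ) xstar,
      θ / s * (xstar - x) ≤ x + 1 + θ - (1 + x) * Real.sqrt ((x + 4) / 5) := by
    intro x hx
    obtain ⟨hxl, hxr⟩ := hx
    set a : ℝ := (xstar - x) / s with ha_def
    set b : ℝ := (x - 1) / s with hb_def
    have ha : 0 ≤ a := div_nonneg (by linarith) hspos.le
    have hb : 0 ≤ b := div_nonneg (by linarith) hspos.le
    have hab : a + b = 1 := by rw [ha_def, hb_def, ← add_div, div_eq_one_iff_eq hsne, hs]; ring
    have hsum : a * 1 + b * xstar = x := by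
      rw [ha_def, hb_def, mul_one, div_mul_eq_mul_div, ← add_div, div_eq_iff hsne, hs]
      ring
    have hconv := psi_convex.2 (Set.mem_Ici.mpr (by norm_num : (0:ℝ) ≤ 5))
      (Set.mem_Ici.mpr (by linarith : (0:ℝ) ≤ xstar + 4)) ha hb hab
    simp only [smul_eq_mul] at hconv
    have hpt : a * 5 + b * (xstar + 4) = x + 4 := by
      have : a * 5 + b * (xstar + 4) = (a * 1 + b * xstar) + 4 * (a + b) := by ring
      rw [this, hsum, hab]; ring
    rw [hpt] at hconv
    have hx4 : (0:ℝ) ≤ x + 4 := by linarith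
    have hxs4 : (0:ℝ) ≤ xstar + 4 := by linarith
    rw [psi_eq _ hx4, psi_eq _ hxs4, psi_eq 5 (by norm_num)] at hconv
    have h5 : Real.sqrt 5 * Real.sqrt 5 = 5 := Real.mul_self_sqrt (by norm_num)
    -- rewrite sqrt((x+4)/5)
    have hsx : Real.sqrt (x + 4) = Real.sqrt ((x+4)/5) * Real.sqrt 5 := by
      rw [sqrt_div5 _ hx4]; field_simp
    have hsxs : Real.sqrt (xstar + 4) = Real.sqrt ((xstar+4)/5) * Real.sqrt 5 := by
      rw [sqrt_div5 _ hxs4]; field_simp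
    rw [hsx, hsxs] at hconv
    -- from hzero : (1+xstar) * sqrt((xstar+4)/5) = xstar + 1 + θ
    have hz : (1 + xstar) * Real.sqrt ((xstar+4)/5) = xstar + 1 + θ := by linarith
    have hconv2 : (x + 1) * Real.sqrt ((x+4)/5) ≤ a * 2 + b * (xstar + 1 + θ) := by
      have h2sqrt : ((5:ℝ) - 3) * Real.sqrt 5 = 2 * Real.sqrt 5 := by ring
      -- hconv : (x+4-3) * (sqrt((x+4)/5) * sqrt 5) ≤ a * ((5-3)*sqrt 5) + b * ((xstar+4-3) * (sqrt((xstar+4)/5)* sqrt 5))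
      have hxx : (x + 4 - 3) * (Real.sqrt ((x+4)/5) * Real.sqrt 5)
          = ((x + 1) * Real.sqrt ((x+4)/5)) * Real.sqrt 5 := by ring
      have hxx2 : (xstar + 4 - 3) * (Real.sqrt ((xstar+4)/5) * Real.sqrt 5)
          = ((1 + xstar) * Real.sqrt ((xstar+4)/5)) * Real.sqrt 5 := by ring
      rw [hxx, hxx2, hz, h2sqrt] at hconv
      have := (mul_le_mul_iff_of_pos_right hsqrt5pos).mp (by linarith [hconv] :
        ((x + 1) * Real.sqrt ((x+4)/5)) * Real.sqrt 5
          ≤ (a * 2 + b * (xstar + 1 + θ)) * Real.sqrt 5)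
      linarith
    -- conclude
    have haθ : θ / s * (xstar - x) = a * θ := by
      rw [ha_def]; ring
    rw [haθ]
    nlinarith [hconv2, hsum, hab]
  -- continuity / integrability
  have hcontF : Continuous (fun x : ℝ => x + 1 + θ - (1 + x) * Real.sqrt ((x + 4) / 5)) := by
    fun_prop
  have hintF : IntervalIntegrable (fun x : ℝ => x + 1 + θ - (1 + x) * Real.sqrt ((x + 4) / 5))
      MeasureTheory.volume (1+θ) xstar := hcontF.intervalIntegrable _ _
  have hcontL : Continuous (fun x : ℝ => θ / s * (xstar - x)) := by fun_prop
  have hintL : IntervalIntegrable (fun x : ℝ => θ / s * (xstar - x))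
      MeasureTheory.volume (1+θ) xstar := hcontL.intervalIntegrable _ _
  have hmono := intervalIntegral.integral_mono_on hab_le hintL hintF key
  -- evaluate the linear integral
  have heval : ∫ x in (1+θ)..xstar, θ / s * (xstar - x)
      = θ / s * (xstar * (xstar - (1+θ)) - (xstar^2 - (1+θ)^2)/2) := by
    rw [intervalIntegral.integral_const_mul]
    congr 1
    rw [intervalIntegral.integral_sub (intervalIntegrable_const) (by
      exact (continuous_id.intervalIntegrable _ _))]
    rw [intervalIntegral.integral_const, integral_id]
    simp [smul_eq_mul]; ring
  rw [heval] at hmono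
  refine le_trans ?_ hmono
  have hX : θ / s * (xstar * (xstar - (1+θ)) - (xstar^2 - (1+θ)^2)/2)
      = θ * (s - θ)^2 / (2 * s) := by
    rw [hs]; field_simp; ring
  rw [hX, le_div_iff₀ (by positivity : (0:ℝ) < 2*s)]
  have h1 : 0 ≤ θ * (s * (5*s - 19*θ)) :=
    mul_nonneg hθ0.le (mul_pos hspos (by linarith : (0:ℝ) < 5*s - 19*θ)).le
  have h2 : 0 < θ^3 := pow_pos hθ0 3
  clear_value s
  nlinarith [h1, h2]
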